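/- Let ν > 0 and 0 < ρ ≤ 1. The symbol σ(ξ) = |ξ|^ν e^{i|ξ|^{1−ρ}} on ℤⁿ (set σ(0)=0) satisfies the first-difference estimate of the class S^{ν}_{ρ,0}: for each j there is C with |Δ_{ξ_j} σ(ξ)| ≤ C ⟨ξ⟩^{ν − ρ} for all ξ ∈ ℤⁿ. -/

import Mathlib

/-- auxiliary 1D function `u ↦ u^α e^{i u^β}`. -/
noncomputable def oscAux (α β : ℝ) (u : ℝ) : ℂ :=
  ((u ^ α : ℝ) : ℂ) * Complex.exp (Complex.I * ((u ^ β : ℝ) : ℂ))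

/-- derivative of the auxiliary function. -/
noncomputable def oscAuxD (α β : ℝ) (u : ℝ) : ℂ :=
  ((α * u ^ (α - 1) : ℝ) : ℂ) * Complex.exp (Complex.I * ((u ^ β : ℝ) : ℂ)) +
    ((u ^ α : ℝ) : ℂ) *
      (Complex.exp (Complex.I * ((u ^ β : ℝ) : ℂ)) * (Complex.I * ((β * u ^ (β - 1) : ℝ) : ℂ)))

lemma oscAux_hasDerivAt (α β : ℝ) {u : ℝ} (hu : 0 < u) :
    HasDerivAt (oscAux α β) (oscAuxD α β u) u := by
  have h1 : HasDerivAt (fun v : ℝ => ((v ^ α : ℝ) : ℂ)) ((α * u ^ (α - 1) : ℝ)) u :=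
    (Real.hasDerivAt_rpow_const (Or.inl hu.ne')).ofReal_comp
  have h2 : HasDerivAt (fun v : ℝ => ((v ^ β : ℝ) : ℂ)) ((β * u ^ (β - 1) : ℝ)) u :=
    (Real.hasDerivAt_rpow_const (Or.inl hu.ne')).ofReal_comp
  have h3 : HasDerivAt (fun v : ℝ => Complex.I * ((v ^ β : ℝ) : ℂ))
      (Complex.I * ((β * u ^ (β - 1) : ℝ) : ℂ)) u := h2.const_mul Complex.I
  have h4 := h3.cexp
  exact h1.mul h4

lemma norm_exp_I_mul_ofReal (x : ℝ) : ‖Complex.exp (Complex.I * (x : ℂ))‖ = 1 := by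
  rw [mul_comm, Complex.norm_exp_ofReal_mul_I]

lemma oscAuxD_norm_le {α β : ℝ} (hα : 0 ≤ α) (hβ : 0 ≤ β) {u : ℝ} (hu : 1 ≤ u) :
    ‖oscAuxD α β u‖ ≤ (α + β) * u ^ (α + β - 1) := by
  have hu0 : (0:ℝ) < u := lt_of_lt_of_le one_pos hu
  have hb : ‖Complex.exp (Complex.I * ((u ^ β : ℝ) : ℂ))‖ = 1 := norm_exp_I_mul_ofReal _
  have h1 : ‖((α * u ^ (α - 1) : ℝ) : ℂ) * Complex.exp (Complex.I * ((u ^ β : ℝ) : ℂ))‖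
      = α * u ^ (α - 1) := by
    rw [norm_mul, hb, mul_one, Complex.norm_real, Real.norm_eq_abs, abs_of_nonneg
      (mul_nonneg hα (Real.rpow_nonneg hu0.le _))]
  have h2 : ‖((u ^ α : ℝ) : ℂ) *
      (Complex.exp (Complex.I * ((u ^ β : ℝ) : ℂ)) * (Complex.I * ((β * u ^ (β - 1) : ℝ) : ℂ)))‖
      = u ^ α * (β * u ^ (β - 1)) := by
    rw [norm_mul, norm_mul, norm_mul, hb, Complex.norm_I, one_mul, one_mul,
      Complex.norm_real, Complex.norm_real, Real.norm_eq_abs, Real.norm_eq_abs,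
      abs_of_nonneg (Real.rpow_nonneg hu0.le _),
      abs_of_nonneg (mul_nonneg hβ (Real.rpow_nonneg hu0.le _))]
  have hmono : u ^ (α - 1) ≤ u ^ (α + β - 1) :=
    Real.rpow_le_rpow_of_exponent_le hu (by linarith)
  have h3 : u ^ α * (β * u ^ (β - 1)) = β * u ^ (α + β - 1) := by
    rw [mul_comm (u ^ α), mul_assoc, ← Real.rpow_add hu0]
    ring_nf
  calc ‖oscAuxD α β u‖ ≤ α * u ^ (α - 1) + u ^ α * (β * u ^ (β - 1)) := by
        rw [← h1, ← h2]; exact norm_add_le _ _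
    _ ≤ α * u ^ (α + β - 1) + β * u ^ (α + β - 1) := by
        rw [h3]
        exact add_le_add (mul_le_mul_of_nonneg_left hmono hα) le_rfl
    _ = (α + β) * u ^ (α + β - 1) := by ring

lemma rpow_comparable {x y K : ℝ} (q : ℝ) (hx : 0 < x) (hy : 0 < y) (hK : 1 ≤ K)
    (h1 : x ≤ K * y) (h2 : y ≤ K * x) : x ^ q ≤ K ^ |q| * y ^ q := by
  have hK0 : (0:ℝ) < K := lt_of_lt_of_le one_pos hK
  rcases le_or_gt 0 q with hq | hq
  · rw [abs_of_nonneg hq]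
    calc x ^ q ≤ (K * y) ^ q := Real.rpow_le_rpow hx.le h1 hq
      _ = K ^ q * y ^ q := Real.mul_rpow hK0.le hy.le
  · rw [abs_of_neg hq]
    have hxy : y / K ≤ x := by
      rw [div_le_iff₀ hK0]; nlinarith
    have hyK : (0:ℝ) < y / K := div_pos hy hK0
    calc x ^ q ≤ (y / K) ^ q := Real.rpow_le_rpow_of_nonpos hyK hxy hq.le
      _ = y ^ q / K ^ q := Real.div_rpow hy.le hK0.le q
      _ = K ^ (-q) * y ^ q := by
          rw [Real.rpow_neg hK0.le]
          field_simp

/-- Euclidean norm of a lattice point. -/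
noncomputable def znorm {n : ℕ} (ξ : Fin n → ℤ) : ℝ :=
  Real.sqrt (∑ i, ((ξ i : ℝ)) ^ 2)

/-- Japanese bracket `⟨ξ⟩` of a lattice point. -/
noncomputable def jap {n : ℕ} (ξ : Fin n → ℤ) : ℝ :=
  Real.sqrt (1 + ∑ i, ((ξ i : ℝ)) ^ 2)

/-- Symbol of the oscillating multiplier `(-Δ)^{ν/2} e^{i(-Δ)^{(1-ρ)/2}}`
(up to powers of `2π`): `σ(ξ) = |ξ|^ν e^{i|ξ|^{1-ρ}}`, with `σ(0) = 0`. -/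
noncomputable def oscSymbol {n : ℕ} (ν ρ : ℝ) (ξ : Fin n → ℤ) : ℂ :=
  ((znorm ξ ^ ν : ℝ) : ℂ) * Complex.exp (Complex.I * ((znorm ξ ^ (1 - ρ) : ℝ) : ℂ))

lemma oscSymbol_eq {n : ℕ} (ν ρ : ℝ) (ξ : Fin n → ℤ) :
    oscSymbol ν ρ ξ = oscAux (ν / 2) ((1 - ρ) / 2) (∑ i, ((ξ i : ℝ)) ^ 2) := by
  have hu : (0:ℝ) ≤ ∑ i, ((ξ i : ℝ)) ^ 2 := Finset.sum_nonneg fun i _ => sq_nonneg _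
  unfold oscSymbol oscAux znorm
  rw [Real.sqrt_eq_rpow, ← Real.rpow_mul hu, ← Real.rpow_mul hu,
    show (1:ℝ)/2 * ν = ν/2 by ring, show (1:ℝ)/2 * (1-ρ) = (1-ρ)/2 by ring]

lemma norm_oscSymbol {n : ℕ} (ν ρ : ℝ) (ξ : Fin n → ℤ) :
    ‖oscSymbol ν ρ ξ‖ = znorm ξ ^ ν := by
  unfold oscSymbol
  rw [norm_mul, norm_exp_I_mul_ofReal, mul_one, Complex.norm_real, Real.norm_eq_abs]
  exact abs_of_nonneg (Real.rpow_nonneg (Real.sqrt_nonneg _) _)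

lemma icc_mem_aux {u₀ t r : ℝ} (hr2 : r ^ 2 = u₀) (hr : 2 ≤ r) (h1 : -r ≤ t) (h2 : t ≤ r) :
    u₀ + 2 * t + 1 ∈ Set.Icc (u₀ / 4) (4 * u₀) := by
  rw [Set.mem_Icc]
  constructor <;> nlinarith

/-- The oscillating symbol `|ξ|^ν e^{i|ξ|^{1-ρ}}` satisfies the first-difference
estimate of the toroidal class `S^ν_{ρ,0}(𝕋ⁿ × ℤⁿ)`. -/
theorem oscillating_symbol_first_difference (n : ℕ) (ν ρ : ℝ) (hν : 0 < ν)
    (hρ₀ : 0 < ρ) (hρ₁ : ρ ≤ 1) (j : Fin n) :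
    ∃ C > 0, ∀ ξ : Fin n → ℤ,
      ‖oscSymbol ν ρ (fun i => ξ i + if i = j then 1 else 0) - oscSymbol ν ρ ξ‖ ≤
        C * jap ξ ^ (ν - ρ) := by
  set α : ℝ := ν / 2 with hαdef
  set β : ℝ := (1 - ρ) / 2 with hβdef
  set q : ℝ := α + β - 1 with hqdef
  have hα : 0 < α := by rw [hαdef]; linarith
  have hβ0 : 0 ≤ β := by rw [hβdef]; linarith
  refine ⟨3 * ((3:ℝ) ^ ν + (2:ℝ) ^ ν) + 3 * (ν + 1) * (8:ℝ) ^ |q|, by positivity, ?_⟩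
  intro ξ
  set ξ' : Fin n → ℤ := fun i => ξ i + if i = j then 1 else 0 with hξ'
  set u₀ := ∑ i, ((ξ i : ℝ)) ^ 2 with hu₀def
  set u₁ := ∑ i, ((ξ' i : ℝ)) ^ 2 with hu₁def
  set t := ((ξ j : ℝ)) with htdef
  have hu₀0 : (0:ℝ) ≤ u₀ := Finset.sum_nonneg fun i _ => sq_nonneg _
  have hkey : u₁ = u₀ + 2 * t + 1 := by
    have hterm : ∀ i, ((ξ' i : ℝ)) ^ 2
        = ((ξ i : ℝ)) ^ 2 + (if i = j then 2 * ((ξ i : ℝ)) + 1 else 0) := by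
      intro i
      by_cases h : i = j <;> simp [hξ', h] <;> push_cast <;> ring
    rw [hu₁def, Finset.sum_congr rfl fun i _ => hterm i, Finset.sum_add_distrib,
      Finset.sum_ite_eq' Finset.univ j fun i => 2 * ((ξ i : ℝ)) + 1]
    simp [← hu₀def, ← htdef]
    ring
  have ht2 : t ^ 2 ≤ u₀ :=
    Finset.single_le_sum (fun i _ => sq_nonneg ((ξ i : ℝ))) (Finset.mem_univ j)
  have hjpsq : jap ξ ^ 2 = 1 + u₀ := Real.sq_sqrt (by linarith)
  have hjp1 : 1 ≤ jap ξ := by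
    rw [show (1:ℝ) = Real.sqrt 1 by simp]
    exact Real.sqrt_le_sqrt (by linarith)
  have hjp0 : (0:ℝ) < jap ξ := lt_of_lt_of_le one_pos hjp1
  have heq0 : oscSymbol ν ρ ξ = oscAux α β u₀ := oscSymbol_eq ν ρ ξ
  have heq1 : oscSymbol ν ρ ξ' = oscAux α β u₁ := oscSymbol_eq ν ρ ξ'
  set r := Real.sqrt u₀ with hrdef
  have hr0 : 0 ≤ r := Real.sqrt_nonneg _
  have hr2 : r ^ 2 = u₀ := Real.sq_sqrt hu₀0
  have habs : |t| ≤ r := by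
    rw [hrdef, ← Real.sqrt_sq_eq_abs]
    exact Real.sqrt_le_sqrt ht2
  have hrjp : r ≤ jap ξ := Real.sqrt_le_sqrt (by linarith)
  have hjppos : (0:ℝ) < jap ξ ^ (ν - ρ) := Real.rpow_pos_of_pos hjp0 _
  rw [heq1, heq0]
  rcases le_or_gt u₀ 4 with hcase | hcase
  · -- small frequencies: trivial bound
    have hrle : r ≤ 2 := by
      rw [hrdef, show (2:ℝ) = Real.sqrt 4 by
        rw [show (4:ℝ) = 2 ^ 2 by norm_num, Real.sqrt_sq (by norm_num : (0:ℝ) ≤ 2)]]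
      exact Real.sqrt_le_sqrt hcase
    have htle : t ≤ 2 := le_trans (le_abs_self t) (le_trans habs hrle)
    have hu₁9 : u₁ ≤ 9 := by rw [hkey]; linarith
    have h0 : ‖oscAux α β u₀‖ ≤ (2:ℝ) ^ ν := by
      rw [← heq0, norm_oscSymbol]
      exact Real.rpow_le_rpow hr0 hrle hν.le
    have h1 : ‖oscAux α β u₁‖ ≤ (3:ℝ) ^ ν := by
      rw [← heq1, norm_oscSymbol]
      refine Real.rpow_le_rpow (Real.sqrt_nonneg _) ?_ hν.le
      rw [znorm, ← hu₁def, show (3:ℝ) = Real.sqrt 9 by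
        rw [show (9:ℝ) = 3 ^ 2 by norm_num, Real.sqrt_sq (by norm_num : (0:ℝ) ≤ 3)]]
      exact Real.sqrt_le_sqrt hu₁9
    have hjple : jap ξ ≤ 3 := by nlinarith [hjpsq, hjp0]
    have hjplower : (1:ℝ) / 3 ≤ jap ξ ^ (ν - ρ) := by
      rcases le_or_gt 0 (ν - ρ) with hsig | hsig
      · have : jap ξ ^ (0:ℝ) ≤ jap ξ ^ (ν - ρ) :=
          Real.rpow_le_rpow_of_exponent_le hjp1 hsig
        rw [Real.rpow_zero] at this
        linarith
      · have h31 : (3:ℝ) ^ (ν - ρ) ≤ jap ξ ^ (ν - ρ) :=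
          Real.rpow_le_rpow_of_nonpos hjp0 hjple hsig.le
        have h32 : (3:ℝ) ^ (-1 : ℝ) ≤ (3:ℝ) ^ (ν - ρ) :=
          Real.rpow_le_rpow_of_exponent_le (by norm_num) (by linarith)
        rw [Real.rpow_neg_one] at h32
        have : (3:ℝ)⁻¹ = 1 / 3 := by norm_num
        linarith
    have hnorm : ‖oscAux α β u₁ - oscAux α β u₀‖ ≤ (3:ℝ) ^ ν + (2:ℝ) ^ ν :=
      le_trans (norm_sub_le _ _) (add_le_add h1 h0)
    have hC2 : (0:ℝ) ≤ 3 * (ν + 1) * (8:ℝ) ^ |q| := by positivity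
    nlinarith [mul_le_mul_of_nonneg_left hjplower
        (by positivity : (0:ℝ) ≤ 3 * ((3:ℝ) ^ ν + (2:ℝ) ^ ν)),
      mul_nonneg hC2 hjppos.le]
  · -- large frequencies: mean value theorem
    have hr2' : (2:ℝ) ≤ r := by
      rw [hrdef, show (2:ℝ) = Real.sqrt 4 by
        rw [show (4:ℝ) = 2 ^ 2 by norm_num, Real.sqrt_sq (by norm_num : (0:ℝ) ≤ 2)]]
      exact Real.sqrt_le_sqrt hcase.le
    have htr : -r ≤ t := neg_le_of_abs_le habs
    have htr' : t ≤ r := le_of_abs_le habs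
    set s : Set ℝ := Set.Icc (u₀ / 4) (4 * u₀) with hsdef
    have hu₀s : u₀ ∈ s := by
      rw [hsdef, Set.mem_Icc]; constructor <;> linarith
    have hu₁s : u₁ ∈ s := by
      rw [hsdef, hkey]
      exact icc_mem_aux hr2 hr2' htr htr'
    have hone : ∀ u ∈ s, (1:ℝ) ≤ u := by
      intro u hu
      rw [hsdef, Set.mem_Icc] at hu
      linarith [hu.1]
    set M : ℝ := (ν + 1) * ((8:ℝ) ^ |q| * jap ξ ^ (2 * q)) with hMdef
    have hM0 : 0 ≤ M := by positivity
    have hbound : ∀ u ∈ s, ‖oscAuxD α β u‖ ≤ M := by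
      intro u hu
      have h1u : (1:ℝ) ≤ u := hone u hu
      have hu0 : (0:ℝ) < u := lt_of_lt_of_le one_pos h1u
      rw [hsdef, Set.mem_Icc] at hu
      have hcmp : u ^ q ≤ (8:ℝ) ^ |q| * (jap ξ ^ 2) ^ q := by
        refine rpow_comparable q hu0 (by positivity) (by norm_num) ?_ ?_
        · rw [hjpsq]; linarith [hu.2]
        · rw [hjpsq]; linarith [hu.1]
      have hjq : (jap ξ ^ 2 : ℝ) ^ q = jap ξ ^ (2 * q) := by
        rw [← Real.rpow_natCast (jap ξ) 2, ← Real.rpow_mul hjp0.le]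
        norm_num
      rw [hjq] at hcmp
      calc ‖oscAuxD α β u‖ ≤ (α + β) * u ^ (α + β - 1) := oscAuxD_norm_le hα.le hβ0 h1u
        _ = (α + β) * u ^ q := by rw [hqdef]
        _ ≤ (α + β) * ((8:ℝ) ^ |q| * jap ξ ^ (2 * q)) :=
            mul_le_mul_of_nonneg_left hcmp (by linarith)
        _ ≤ M := by
            rw [hMdef]
            refine mul_le_mul_of_nonneg_right ?_ (by positivity)
            rw [hαdef, hβdef]; linarith
    have hderiv : ∀ u ∈ s, HasDerivWithinAt (oscAux α β) (oscAuxD α β u) s u := by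
      intro u hu
      exact (oscAux_hasDerivAt α β (lt_of_lt_of_le one_pos (hone u hu))).hasDerivWithinAt
    have hmvt : ‖oscAux α β u₁ - oscAux α β u₀‖ ≤ M * ‖u₁ - u₀‖ :=
      (convex_Icc _ _).norm_image_sub_le_of_norm_hasDerivWithin_le hderiv hbound hu₀s hu₁s
    have hdiff : ‖u₁ - u₀‖ ≤ 3 * jap ξ := by
      rw [Real.norm_eq_abs, show u₁ - u₀ = 2 * t + 1 by rw [hkey]; ring]
      have htjp : |t| ≤ jap ξ := le_trans habs hrjp
      calc |2 * t + 1| ≤ |2 * t| + |(1:ℝ)| := abs_add_le _ _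
        _ = 2 * |t| + 1 := by rw [abs_mul]; norm_num
        _ ≤ 3 * jap ξ := by linarith
    have hexp : jap ξ ^ (2 * q) * jap ξ = jap ξ ^ (ν - ρ) := by
      rw [← Real.rpow_add_one hjp0.ne' (2 * q),
        show 2 * q + 1 = ν - ρ by rw [hqdef, hαdef, hβdef]; ring]
    calc ‖oscAux α β u₁ - oscAux α β u₀‖ ≤ M * ‖u₁ - u₀‖ := hmvt
      _ ≤ M * (3 * jap ξ) := mul_le_mul_of_nonneg_left hdiff hM0
      _ = 3 * (ν + 1) * (8:ℝ) ^ |q| * (jap ξ ^ (2 * q) * jap ξ) := by rw [hMdef]; ring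
      _ = 3 * (ν + 1) * (8:ℝ) ^ |q| * jap ξ ^ (ν - ρ) := by rw [hexp]
      _ ≤ (3 * ((3:ℝ) ^ ν + (2:ℝ) ^ ν) + 3 * (ν + 1) * (8:ℝ) ^ |q|) * jap ξ ^ (ν - ρ) := by
          refine mul_le_mul_of_nonneg_right ?_ hjppos.le
          linarith [Real.rpow_pos_of_pos (by norm_num : (0:ℝ) < 3) ν,
            Real.rpow_pos_of_pos (by norm_num : (0:ℝ) < 2) ν]
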